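/- (Weyl-type inequality for λ's.) Let A and B be admissible pseudo-Hermitian n×n matrices, and suppose C = A + B is also admissible. Denote by λ_p(·) ≥ … ≥ λ_1(·) > μ_1(·) ≥ … ≥ μ_q(·) the eigenvalues of each of A, B, C. Then for each 1 ≤ k ≤ p one has λ_k(A+B) ≥ λ_k(A) + λ_1(B). -/

import Mathlib

open Matrix

/-- The signature matrix `J = diag(1,…,1,−1,…,−1)` with `p` ones and `q` minus-ones. -/
noncomputable def Jmat (p q : ℕ) : Matrix (Fin (p + q)) (Fin (p + q)) ℂ :=
  Matrix.diagonal (fun i => if (i : ℕ) < p then 1 else -1)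

/-- The indefinite pairing `⟨z,w⟩ = Σ_{i<p} z_i conj(w_i) − Σ_{i≥p} z_i conj(w_i)`;
equivalently `w† · z` where `x† = (J conj(x))ᵀ`. -/
noncomputable def pairing (p q : ℕ) (z w : Fin (p + q) → ℂ) : ℂ :=
  ∑ i : Fin (p + q),
    (if (i : ℕ) < p then z i * (starRingEnd ℂ) (w i) else -(z i * (starRingEnd ℂ) (w i)))

/-- The diagonal entries of `Λ = diag(λ_p, …, λ_1, μ_1, …, μ_q)`, where `lam` and `mu`
are 0-indexed: `lam i = λ_{i+1}` and `mu j = μ_{j+1}`. -/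
noncomputable def diagEntries (p q : ℕ) (lam : Fin p → ℝ) (mu : Fin q → ℝ) :
    Fin (p + q) → ℂ :=
  fun i =>
    if h : (i : ℕ) < p then ((lam ⟨p - 1 - (i : ℕ), by omega⟩ : ℝ) : ℂ)
    else ((mu ⟨(i : ℕ) - p, by have := i.isLt; omega⟩ : ℝ) : ℂ)

/-- real version of the diagonal entries -/
noncomputable def diagRe (p q : ℕ) (lam : Fin p → ℝ) (mu : Fin q → ℝ) :
    Fin (p + q) → ℝ :=
  fun i =>
    if h : (i : ℕ) < p then lam ⟨p - 1 - (i : ℕ), by omega⟩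
    else mu ⟨(i : ℕ) - p, by have := i.isLt; omega⟩

lemma diagEntries_eq (p q : ℕ) (lam : Fin p → ℝ) (mu : Fin q → ℝ) (i : Fin (p+q)) :
    diagEntries p q lam mu i = ((diagRe p q lam mu i : ℝ) : ℂ) := by
  unfold diagEntries diagRe
  split_ifs <;> rfl

lemma JmatJmat (p q : ℕ) : Jmat p q * Jmat p q = 1 := by
  unfold Jmat
  rw [Matrix.diagonal_mul_diagonal]
  ext i j
  simp only [Matrix.diagonal_apply, Matrix.one_apply]
  split_ifs <;> norm_num

lemma pairing_eq_dot (p q : ℕ) (z w : Fin (p+q) → ℂ) :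
    pairing p q z w = star w ⬝ᵥ ((Jmat p q) *ᵥ z) := by
  unfold pairing Jmat
  rw [dotProduct]
  refine Finset.sum_congr rfl fun i _ => ?_
  rw [Matrix.mulVec_diagonal]
  by_cases h : (i:ℕ) < p <;> simp [h, RCLike.star_def] <;> ring

lemma pairing_transform (p q : ℕ) (U : Matrix (Fin (p+q)) (Fin (p+q)) ℂ)
    (hUJ : U * Jmat p q * U.conjTranspose = Jmat p q) (z w : Fin (p+q) → ℂ) :
    pairing p q (U *ᵥ z) (U *ᵥ w) = pairing p q z w := by
  have hJJ := JmatJmat p q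
  have h1 : Jmat p q * U * Jmat p q * Uᴴ = 1 := by
    have h : Jmat p q * (U * Jmat p q * Uᴴ) = 1 := by rw [hUJ, hJJ]
    simpa [Matrix.mul_assoc] using h
  have h2 : Uᴴ * (Jmat p q * U * Jmat p q) = 1 := mul_eq_one_comm.mp h1
  have hU' : Uᴴ * Jmat p q * U = Jmat p q := by
    have h3 := congrArg (· * Jmat p q) h2
    simp only [Matrix.mul_assoc, Matrix.one_mul] at h3
    rw [hJJ, Matrix.mul_one] at h3
    simpa [Matrix.mul_assoc] using h3
  rw [pairing_eq_dot, pairing_eq_dot, Matrix.star_mulVec, Matrix.mulVec_mulVec,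
    ← Matrix.dotProduct_mulVec, Matrix.mulVec_mulVec, ← Matrix.mul_assoc, hU']

lemma pairing_add_left (p q : ℕ) (u v w : Fin (p+q) → ℂ) :
    pairing p q (u + v) w = pairing p q u w + pairing p q v w := by
  unfold pairing
  rw [← Finset.sum_add_distrib]
  refine Finset.sum_congr rfl fun i _ => ?_
  by_cases h : (i:ℕ) < p <;> simp [h] <;> ring

lemma pairing_diag_re (p q : ℕ) (d : Fin (p+q) → ℝ) (y : Fin (p+q) → ℂ) :
    (pairing p q ((Matrix.diagonal fun i => ((d i : ℝ) : ℂ)) *ᵥ y) y).re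
      = ∑ i : Fin (p+q), (if (i:ℕ) < p then (1:ℝ) else -1) * (d i * Complex.normSq (y i)) := by
  unfold pairing
  rw [Complex.re_sum]
  refine Finset.sum_congr rfl fun i _ => ?_
  rw [Matrix.mulVec_diagonal]
  by_cases h : (i:ℕ) < p <;>
    simp [h, mul_assoc, Complex.mul_conj, ← Complex.ofReal_mul]

lemma pairing_self_re (p q : ℕ) (y : Fin (p+q) → ℂ) :
    (pairing p q y y).re
      = ∑ i : Fin (p+q), (if (i:ℕ) < p then (1:ℝ) else -1) * Complex.normSq (y i) := by
  unfold pairing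
  rw [Complex.re_sum]
  refine Finset.sum_congr rfl fun i _ => ?_
  by_cases h : (i:ℕ) < p <;> simp [h, Complex.mul_conj]

lemma sum_mul_ge (p q : ℕ) (c : ℝ) (d : Fin (p+q) → ℝ) (y : Fin (p+q) → ℂ)
    (h : ∀ i : Fin (p+q), y i ≠ 0 → (if (i:ℕ) < p then c ≤ d i else d i ≤ c)) :
    c * ∑ i : Fin (p+q), (if (i:ℕ) < p then (1:ℝ) else -1) * Complex.normSq (y i)
      ≤ ∑ i : Fin (p+q), (if (i:ℕ) < p then (1:ℝ) else -1) * (d i * Complex.normSq (y i)) := by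
  rw [Finset.mul_sum, ← sub_nonneg, ← Finset.sum_sub_distrib]
  refine Finset.sum_nonneg fun i _ => ?_
  by_cases hy : y i = 0
  · simp [hy]
  · have hn : 0 ≤ Complex.normSq (y i) := Complex.normSq_nonneg _
    have hh := h i hy
    by_cases hip : (i:ℕ) < p <;> simp only [hip, if_true, if_false] at hh ⊢ <;> nlinarith

lemma sum_mul_le (p q : ℕ) (c : ℝ) (d : Fin (p+q) → ℝ) (y : Fin (p+q) → ℂ)
    (h : ∀ i : Fin (p+q), y i ≠ 0 → ((i:ℕ) < p ∧ d i ≤ c)) :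
    ∑ i : Fin (p+q), (if (i:ℕ) < p then (1:ℝ) else -1) * (d i * Complex.normSq (y i))
      ≤ c * ∑ i : Fin (p+q), (if (i:ℕ) < p then (1:ℝ) else -1) * Complex.normSq (y i) := by
  rw [Finset.mul_sum, ← sub_nonneg, ← Finset.sum_sub_distrib]
  refine Finset.sum_nonneg fun i _ => ?_
  by_cases hy : y i = 0
  · simp [hy]
  · have hn : 0 ≤ Complex.normSq (y i) := Complex.normSq_nonneg _
    obtain ⟨hip, hdc⟩ := h i hy
    simp only [hip, if_true]
    nlinarith

lemma den_pos (p q : ℕ) (y : Fin (p+q) → ℂ)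
    (h : ∀ i : Fin (p+q), y i ≠ 0 → (i:ℕ) < p) (hy : y ≠ 0) :
    0 < ∑ i : Fin (p+q), (if (i:ℕ) < p then (1:ℝ) else -1) * Complex.normSq (y i) := by
  obtain ⟨i0, hi0⟩ := Function.ne_iff.mp hy
  have hi0' : (i0:ℕ) < p := h i0 hi0
  refine Finset.sum_pos' (fun i _ => ?_) ⟨i0, Finset.mem_univ _, ?_⟩
  · by_cases hyi : y i = 0
    · simp [hyi]
    · simp only [h i hyi, if_true, one_mul]
      exact Complex.normSq_nonneg _
  · simp only [hi0', if_true, one_mul]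
    exact Complex.normSq_pos.mpr hi0

lemma pairing_conj (p q : ℕ) (U D A : Matrix (Fin (p+q)) (Fin (p+q)) ℂ)
    (hUu : IsUnit U) (hUJ : U * Jmat p q * U.conjTranspose = Jmat p q)
    (hA : A = U * D * U⁻¹) (y : Fin (p+q) → ℂ) :
    pairing p q (A *ᵥ (U *ᵥ y)) (U *ᵥ y) = pairing p q (D *ᵥ y) y := by
  have hdet := (Matrix.isUnit_iff_isUnit_det U).mp hUu
  have h1 : A *ᵥ (U *ᵥ y) = U *ᵥ (D *ᵥ y) := by
    rw [Matrix.mulVec_mulVec, Matrix.mulVec_mulVec, hA, Matrix.mul_assoc (U*D) U⁻¹ U,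
      Matrix.nonsing_inv_mul U hdet, Matrix.mul_one]
  rw [h1, pairing_transform p q U hUJ]

lemma mulVec_sum_smul (p q m : ℕ) (M : Matrix (Fin (p+q)) (Fin (p+q)) ℂ)
    (c : Fin m → ℂ) (f : Fin m → (Fin (p+q) → ℂ)) :
    M *ᵥ (∑ j, c j • f j) = ∑ j, c j • (M *ᵥ f j) := by
  rw [Matrix.mulVec_sum]; simp only [Matrix.mulVec_smul]

lemma cols_li (p q m : ℕ) (M : Matrix (Fin (p+q)) (Fin (p+q)) ℂ) (h : IsUnit M)
    (e : Fin m → Fin (p+q)) (he : Function.Injective e) :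
    LinearIndependent ℂ (fun j : Fin m => M *ᵥ Pi.single (e j) (1:ℂ)) := by
  have hb : LinearIndependent ℂ (fun i : Fin (p+q) => Pi.single i (1:ℂ)) := by
    have h2 : (⇑(Pi.basisFun ℂ (Fin (p+q)))) = fun i => Pi.single i (1:ℂ) :=
      funext fun i => by simp
    have := (Pi.basisFun ℂ (Fin (p+q))).linearIndependent
    rwa [h2] at this
  have hinj : Function.Injective M.mulVecLin := by
    intro a b hab
    have := congrArg (M⁻¹ *ᵥ ·) hab
    simpa [Matrix.mulVecLin, Matrix.mulVec_mulVec,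
      Matrix.nonsing_inv_mul M ((Matrix.isUnit_iff_isUnit_det M).mp h)] using this
  exact ((hb.comp e he).map' M.mulVecLin (LinearMap.ker_eq_bot.mpr hinj))

def emb1 (p q k : ℕ) (hk1 : 1 ≤ k) (hk2 : k ≤ p) : Fin k → Fin (p+q) :=
  fun j => ⟨p - k + (j:ℕ), by have := j.isLt; omega⟩

lemma emb1_inj (p q k : ℕ) (hk1 : 1 ≤ k) (hk2 : k ≤ p) :
    Function.Injective (emb1 p q k hk1 hk2) := by
  intro a b hab
  have := congrArg Fin.val hab
  simp only [emb1] at this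
  exact Fin.ext (by omega)

def emb2 (p q k : ℕ) (hk1 : 1 ≤ k) (hk2 : k ≤ p) : Fin (p - k + 1 + q) → Fin (p+q) :=
  fun j => ⟨if (j:ℕ) ≤ p - k then (j:ℕ) else (j:ℕ) + (k-1), by have := j.isLt; split <;> omega⟩

lemma emb2_inj (p q k : ℕ) (hk1 : 1 ≤ k) (hk2 : k ≤ p) :
    Function.Injective (emb2 p q k hk1 hk2) := by
  intro a b hab
  have hv := congrArg Fin.val hab
  simp only [emb2] at hv
  have ha := a.isLt; have hb := b.isLt
  by_cases h1 : (a:ℕ) ≤ p - k <;> by_cases h2 : (b:ℕ) ≤ p - k <;>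
    simp only [h1, h2, if_true, if_false] at hv <;> exact Fin.ext (by omega)

lemma comb_apply_zero (N m : ℕ) (e : Fin m → Fin N) (c : Fin m → ℂ) (i : Fin N)
    (h : ∀ j, e j ≠ i) : (∑ j, c j • (Pi.single (e j) (1:ℂ) : Fin N → ℂ)) i = 0 := by
  rw [Finset.sum_apply]
  apply Finset.sum_eq_zero
  intro j _
  have hne : i ≠ e j := fun he => h j he.symm
  simp [Pi.single_eq_of_ne hne]

lemma re_num_den (p q : ℕ) (lam : Fin p → ℝ) (mu : Fin q → ℝ)
    (U A : Matrix (Fin (p+q)) (Fin (p+q)) ℂ) (hUu : IsUnit U)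
    (hUJ : U * Jmat p q * U.conjTranspose = Jmat p q)
    (hA : A = U * Matrix.diagonal (diagEntries p q lam mu) * U⁻¹) (y : Fin (p+q) → ℂ) :
    (pairing p q (A *ᵥ (U *ᵥ y)) (U *ᵥ y)).re
        = ∑ i : Fin (p+q), (if (i:ℕ) < p then (1:ℝ) else -1)
            * (diagRe p q lam mu i * Complex.normSq (y i))
    ∧ (pairing p q (U *ᵥ y) (U *ᵥ y)).re
        = ∑ i : Fin (p+q), (if (i:ℕ) < p then (1:ℝ) else -1) * Complex.normSq (y i) := by
  have hdiag : Matrix.diagonal (diagEntries p q lam mu)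
      = Matrix.diagonal (fun i => ((diagRe p q lam mu i : ℝ) : ℂ)) := by
    rw [show diagEntries p q lam mu = fun i => ((diagRe p q lam mu i : ℝ) : ℂ) from
      funext (diagEntries_eq p q lam mu)]
  constructor
  · rw [pairing_conj p q U _ A hUu hUJ hA y, hdiag]
    exact pairing_diag_re p q (diagRe p q lam mu) y
  · rw [pairing_transform p q U hUJ]
    exact pairing_self_re p q y


/-- `A` is an admissible pseudo-Hermitian matrix with (real) eigenvalues
`λ_p ≥ … ≥ λ_1 > μ_1 ≥ … ≥ μ_q`, recorded 0-indexed as `lam i = λ_{i+1}` (so `lam` is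
monotone) and `mu j = μ_{j+1}` (so `mu` is antitone), with `λ_1 > μ_1`, and
`A = U Λ U⁻¹` for some invertible `U` with `U J Uᴴ = J`. -/
def IsAdmissible (p q : ℕ) (hp : 0 < p) (hq : 0 < q)
    (A : Matrix (Fin (p + q)) (Fin (p + q)) ℂ)
    (lam : Fin p → ℝ) (mu : Fin q → ℝ) : Prop :=
  A * Jmat p q = Jmat p q * A.conjTranspose ∧
  Monotone lam ∧ Antitone mu ∧ mu ⟨0, hq⟩ < lam ⟨0, hp⟩ ∧
  ∃ U : Matrix (Fin (p + q)) (Fin (p + q)) ℂ,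
    IsUnit U ∧ U * Jmat p q * U.conjTranspose = Jmat p q ∧
    A = U * Matrix.diagonal (diagEntries p q lam mu) * U⁻¹

/-- The Rayleigh ratio `R_A(x) = (x† A x)/(x† x)`, as a real number (for admissible
pseudo-Hermitian `A` both `x† A x` and `x† x` are real). -/
noncomputable def rayleigh (p q : ℕ) (A : Matrix (Fin (p + q)) (Fin (p + q)) ℂ)
    (x : Fin (p + q) → ℂ) : ℝ :=
  (pairing p q (A.mulVec x) x).re / (pairing p q x x).re

/-- Weyl-type inequality for λ's: if `A`, `B`, and `C = A + B` are
admissible, then `λ_k(A+B) ≥ λ_k(A) + λ_1(B)` for `1 ≤ k ≤ p`. -/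
theorem weyl_type_lambda
    (p q : ℕ) (hp : 0 < p) (hq : 0 < q)
    (A B : Matrix (Fin (p + q)) (Fin (p + q)) ℂ)
    (lamA : Fin p → ℝ) (muA : Fin q → ℝ)
    (lamB : Fin p → ℝ) (muB : Fin q → ℝ)
    (lamC : Fin p → ℝ) (muC : Fin q → ℝ)
    (hA : IsAdmissible p q hp hq A lamA muA)
    (hB : IsAdmissible p q hp hq B lamB muB)
    (hC : IsAdmissible p q hp hq (A + B) lamC muC)
    (k : ℕ) (hk1 : 1 ≤ k) (hk2 : k ≤ p) :
    lamA ⟨k - 1, by omega⟩ + lamB ⟨0, hp⟩ ≤ lamC ⟨k - 1, by omega⟩ := by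
  obtain ⟨-, hmA, haA, hgA, U, hUu, hUJ, hAeq⟩ := hA
  obtain ⟨-, hmB, haB, hgB, V, hVu, hVJ, hBeq⟩ := hB
  obtain ⟨-, hmC, haC, hgC, W, hWu, hWJ, hCeq⟩ := hC
  -- subspaces
  set f₁ : Fin k → (Fin (p+q) → ℂ) :=
    fun j => W *ᵥ Pi.single (emb1 p q k hk1 hk2 j) (1:ℂ) with hf₁
  set f₂ : Fin (p - k + 1 + q) → (Fin (p+q) → ℂ) :=
    fun j => U *ᵥ Pi.single (emb2 p q k hk1 hk2 j) (1:ℂ) with hf₂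
  set M₁ : Submodule ℂ (Fin (p+q) → ℂ) := Submodule.span ℂ (Set.range f₁) with hM₁
  set M₂ : Submodule ℂ (Fin (p+q) → ℂ) := Submodule.span ℂ (Set.range f₂) with hM₂
  have hr₁ : Module.finrank ℂ M₁ = k := by
    rw [hM₁, hf₁, finrank_span_eq_card (cols_li p q k W hWu _ (emb1_inj p q k hk1 hk2))]
    simp
  have hr₂ : Module.finrank ℂ M₂ = p - k + 1 + q := by
    rw [hM₂, hf₂, finrank_span_eq_card (cols_li p q _ U hUu _ (emb2_inj p q k hk1 hk2))]
    simp
  have hsum := Submodule.finrank_sup_add_finrank_inf_eq M₁ M₂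
  have hsup : Module.finrank ℂ ↥(M₁ ⊔ M₂) ≤ p + q := by
    have h1 := Submodule.finrank_le (M₁ ⊔ M₂)
    rwa [Module.finrank_fin_fun ℂ] at h1
  have hpos : 0 < Module.finrank ℂ ↥(M₁ ⊓ M₂) := by
    rw [hr₁, hr₂] at hsum; omega
  have hnt : Nontrivial ↥(M₁ ⊓ M₂) := Module.nontrivial_of_finrank_pos hpos
  obtain ⟨⟨x, hx⟩, hne⟩ := exists_ne (0 : ↥(M₁ ⊓ M₂))
  have hxne : x ≠ 0 := by simpa [Subtype.ext_iff] using hne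
  have hx₁ : x ∈ M₁ := hx.1
  have hx₂ : x ∈ M₂ := hx.2
  -- coordinates w.r.t. W
  obtain ⟨c₁, hc₁⟩ := (Submodule.mem_span_range_iff_exists_fun ℂ).mp hx₁
  set y : Fin (p+q) → ℂ := ∑ j, c₁ j • (Pi.single (emb1 p q k hk1 hk2 j) (1:ℂ) : Fin (p+q) → ℂ) with hy
  have hxy : W *ᵥ y = x := by
    rw [hy, mulVec_sum_smul]; exact hc₁
  have hysupp : ∀ i : Fin (p+q), y i ≠ 0 → (p - k ≤ (i:ℕ) ∧ (i:ℕ) < p) := by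
    intro i hyi
    by_contra hcon
    exact hyi (by
      rw [hy]
      apply comb_apply_zero
      intro j hj
      have hv := congrArg Fin.val hj
      simp only [emb1] at hv
      have := j.isLt
      omega)
  -- coordinates w.r.t. U
  obtain ⟨c₂, hc₂⟩ := (Submodule.mem_span_range_iff_exists_fun ℂ).mp hx₂
  set z : Fin (p+q) → ℂ := ∑ j, c₂ j • (Pi.single (emb2 p q k hk1 hk2 j) (1:ℂ) : Fin (p+q) → ℂ) with hz
  have hxz : U *ᵥ z = x := by
    rw [hz, mulVec_sum_smul]; exact hc₂
  have hzsupp : ∀ i : Fin (p+q), z i ≠ 0 → ((i:ℕ) ≤ p - k ∨ p ≤ (i:ℕ)) := by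
    intro i hzi
    by_contra hcon
    push_neg at hcon
    exact hzi (by
      rw [hz]
      apply comb_apply_zero
      intro j hj
      have hv := congrArg Fin.val hj
      simp only [emb2] at hv
      have := j.isLt
      by_cases hjc : (j:ℕ) ≤ p - k <;> simp only [hjc, if_true, if_false] at hv <;> omega)
  -- coordinates w.r.t. V
  set w : Fin (p+q) → ℂ := V⁻¹ *ᵥ x with hw
  have hxw : V *ᵥ w = x := by
    rw [hw, Matrix.mulVec_mulVec,
      Matrix.mul_nonsing_inv V ((Matrix.isUnit_iff_isUnit_det V).mp hVu), Matrix.one_mulVec]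
  have hyne : y ≠ 0 := fun h0 => hxne (by rw [← hxy, h0, Matrix.mulVec_zero])
  -- real formulas
  obtain ⟨hNC, hDy⟩ := re_num_den p q lamC muC W (A+B) hWu hWJ hCeq y
  obtain ⟨hNA, hDz⟩ := re_num_den p q lamA muA U A hUu hUJ hAeq z
  obtain ⟨hNB, hDw⟩ := re_num_den p q lamB muB V B hVu hVJ hBeq w
  rw [hxy] at hNC hDy
  rw [hxz] at hNA hDz
  rw [hxw] at hNB hDw
  set D : ℝ := ∑ i : Fin (p+q), (if (i:ℕ) < p then (1:ℝ) else -1) * Complex.normSq (y i)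
    with hD
  have hDpos : 0 < D := den_pos p q y (fun i hi => (hysupp i hi).2) hyne
  have hDz' : ∑ i : Fin (p+q), (if (i:ℕ) < p then (1:ℝ) else -1) * Complex.normSq (z i) = D := by
    rw [← hDz, hDy]
  have hDw' : ∑ i : Fin (p+q), (if (i:ℕ) < p then (1:ℝ) else -1) * Complex.normSq (w i) = D := by
    rw [← hDw, hDy]
  -- the three inequalities
  have hCle : (pairing p q ((A+B) *ᵥ x) x).re ≤ lamC ⟨k-1, by omega⟩ * D := by
    rw [hNC, hD]
    apply sum_mul_le
    intro i hyi
    obtain ⟨hik, hip⟩ := hysupp i hyi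
    refine ⟨hip, ?_⟩
    unfold diagRe
    rw [dif_pos hip]
    exact hmC (by simp only [Fin.mk_le_mk]; omega)
  have hAge : lamA ⟨k-1, by omega⟩ * D ≤ (pairing p q (A *ᵥ x) x).re := by
    rw [hNA, ← hDz']
    apply sum_mul_ge
    intro i hzi
    have hsupp := hzsupp i hzi
    by_cases hip : (i:ℕ) < p
    · rw [if_pos hip]
      unfold diagRe
      rw [dif_pos hip]
      exact hmA (by simp only [Fin.mk_le_mk]; omega)
    · rw [if_neg hip]
      unfold diagRe
      rw [dif_neg hip]
      have h1 : muA ⟨(i:ℕ) - p, by have := i.isLt; omega⟩ ≤ muA ⟨0, hq⟩ :=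
        haA (by simp only [Fin.mk_le_mk]; omega)
      have h2 : lamA ⟨0, hp⟩ ≤ lamA ⟨k-1, by omega⟩ :=
        hmA (by simp only [Fin.mk_le_mk]; omega)
      linarith
  have hBge : lamB ⟨0, hp⟩ * D ≤ (pairing p q (B *ᵥ x) x).re := by
    rw [hNB, ← hDw']
    apply sum_mul_ge
    intro i _
    by_cases hip : (i:ℕ) < p
    · rw [if_pos hip]
      unfold diagRe
      rw [dif_pos hip]
      exact hmB (by simp only [Fin.mk_le_mk]; omega)
    · rw [if_neg hip]
      unfold diagRe
      rw [dif_neg hip]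
      have h1 : muB ⟨(i:ℕ) - p, by have := i.isLt; omega⟩ ≤ muB ⟨0, hq⟩ :=
        haB (by simp only [Fin.mk_le_mk]; omega)
      linarith
  have hadd : (pairing p q ((A+B) *ᵥ x) x).re
      = (pairing p q (A *ᵥ x) x).re + (pairing p q (B *ᵥ x) x).re := by
    rw [Matrix.add_mulVec, pairing_add_left, Complex.add_re]
  have hfinal : (lamA ⟨k-1, by omega⟩ + lamB ⟨0, hp⟩) * D ≤ lamC ⟨k-1, by omega⟩ * D := by
    rw [add_mul]; linarith [hCle, hAge, hBge, hadd]
  exact le_of_mul_le_mul_right hfinal hDpos
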